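/- (Lemma 5.) Let S = {o₁, …, o_m} with o₁ < ⋯ < o_m be a set of vertices that two-sided guards every point of the terrain, let 1 ≤ i ≤ m, let N be the rightmost point not right-guarded by {o_i, …, o_m}, and let r = R(N) be the rightmost vertex that sees N. Suppose r ∉ O_R(N). Then for every point x of the terrain with r < x and every g ∈ O_R(N), g does not left-guard x (i.e., g does not see x). -/

import Mathlib

/-- `p` sees `q` on terrain `T`: the segment joining `(p, T p)` and `(q, T q)`
lies on or above the graph of `T`. -/
def Sees (T : ℝ → ℝ) (p q : ℝ) : Prop :=
  ∀ t ∈ Set.Icc (0 : ℝ) 1, T ((1 - t) * p + t * q) ≤ (1 - t) * T p + t * T q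

/-- `v` left-guards `p`: `v` is on or to the left of `p` and sees `p`. -/
def LeftGuards (T : ℝ → ℝ) (v p : ℝ) : Prop := v ≤ p ∧ Sees T v p

/-- `v` right-guards `p`: `v` is on or to the right of `p` and sees `p`. -/
def RightGuards (T : ℝ → ℝ) (v p : ℝ) : Prop := p ≤ v ∧ Sees T v p

/-- A set `S` two-sided guards `p` if some member left-guards `p` and some member
right-guards `p`. -/
def TwoSidedGuards (T : ℝ → ℝ) (S : Set ℝ) (p : ℝ) : Prop :=
  (∃ v ∈ S, LeftGuards T v p) ∧ (∃ v ∈ S, RightGuards T v p)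

/-- A 1.5D terrain with `n + 1` vertices: an `x`-monotone polygonal chain, given by
strictly increasing vertex abscissas `x 0 < ⋯ < x n` and a height function `T` which is
continuous on `[x 0, x n]` and affine on each edge interval `[x j, x (j+1)]`. -/
structure Terrain (n : ℕ) where
  x : Fin (n + 1) → ℝ
  mono : StrictMono x
  T : ℝ → ℝ
  cont : ContinuousOn T (Set.Icc (x 0) (x (Fin.last n)))
  affine : ∀ j : Fin n, ∀ t ∈ Set.Icc (0 : ℝ) 1,
    T ((1 - t) * x j.castSucc + t * x j.succ) =
      (1 - t) * T (x j.castSucc) + t * T (x j.succ)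

/-! ### Auxiliary lemmas -/

lemma sees_symm {T : ℝ → ℝ} {p q : ℝ} (h : Sees T p q) : Sees T q p := by
  intro t ht
  have h' := h (1 - t) ⟨by linarith [ht.2], by linarith [ht.1]⟩
  have e : (1 - (1 - t)) * p + (1 - t) * q = (1 - t) * q + t * p := by ring
  rw [e] at h'
  linarith [h']

lemma above_of_sees {T : ℝ → ℝ} {a b : ℝ} (hab : a < b) (h : Sees T a b) :
    ∀ s ∈ Set.Icc a b, (b - a) * T s ≤ (b - s) * T a + (s - a) * T b := by
  intro s hs
  have hba : (0:ℝ) < b - a := by linarith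
  have ht : (s - a) / (b - a) ∈ Set.Icc (0:ℝ) 1 := by
    constructor
    · apply div_nonneg (by linarith [hs.1]) hba.le
    · rw [div_le_one hba]; linarith [hs.2]
  have h' := h _ ht
  have e : (1 - (s - a) / (b - a)) * a + (s - a) / (b - a) * b = s := by
    field_simp; ring
  rw [e] at h'
  have h'' := mul_le_mul_of_nonneg_left h' hba.le
  have e2 : (b - a) * ((1 - (s - a) / (b - a)) * T a + (s - a) / (b - a) * T b)
      = (b - s) * T a + (s - a) * T b := by
    field_simp
    ring
  linarith [h'', e2]

lemma sees_of_above {T : ℝ → ℝ} {a b : ℝ} (hab : a < b)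
    (h : ∀ s ∈ Set.Icc a b, (b - a) * T s ≤ (b - s) * T a + (s - a) * T b) :
    Sees T a b := by
  intro t ht
  have hba : (0:ℝ) < b - a := by linarith
  have hs : (1 - t) * a + t * b ∈ Set.Icc a b := by
    constructor
    · nlinarith [ht.1, ht.2]
    · nlinarith [ht.1, ht.2]
  have h' := h _ hs
  have e : (b - ((1 - t) * a + t * b)) * T a + (((1 - t) * a + t * b) - a) * T b
      = (b - a) * ((1 - t) * T a + t * T b) := by ring
  rw [e] at h'
  exact le_of_mul_le_mul_left h' hba

/-- The order claim: for `a ≤ b < c < d`, if `a` sees `c` and `b` sees `d`,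
then `a` sees `d`. -/
lemma order_claim {T : ℝ → ℝ} {a b c d : ℝ} (hab : a ≤ b) (hbc : b < c) (hcd : c < d)
    (hac : Sees T a c) (hbd : Sees T b d) : Sees T a d := by
  have hac' := above_of_sees (show a < c by linarith) hac
  have hbd' := above_of_sees (show b < d by linarith) hbd
  have h1 := hac' b ⟨hab, hbc.le⟩
  have h2 := hbd' c ⟨hbc.le, hcd.le⟩
  have goal1 : (d - a) * T c ≤ (d - c) * T a + (c - a) * T d := by
    have k1 := mul_le_mul_of_nonneg_left h1 (show (0:ℝ) ≤ d - c by linarith)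
    have k2 := mul_le_mul_of_nonneg_left h2 (show (0:ℝ) ≤ c - a by linarith)
    have key : (c - b) * ((d - a) * T c) ≤ (c - b) * ((d - c) * T a + (c - a) * T d) := by
      linarith only [k1, k2]
    exact le_of_mul_le_mul_left key (by linarith)
  have goal2 : (d - a) * T b ≤ (d - b) * T a + (b - a) * T d := by
    have k1 := mul_le_mul_of_nonneg_left h1 (show (0:ℝ) ≤ d - b by linarith)
    have k2 := mul_le_mul_of_nonneg_left h2 (show (0:ℝ) ≤ b - a by linarith)
    have key : (c - b) * ((d - a) * T b) ≤ (c - b) * ((d - b) * T a + (b - a) * T d) := by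
      linarith only [k1, k2]
    exact le_of_mul_le_mul_left key (by linarith)
  apply sees_of_above (show a < d by linarith)
  intro s hs
  rcases le_total s c with h | h
  · have hsac := hac' s ⟨hs.1, h⟩
    have k1 := mul_le_mul_of_nonneg_left hsac (show (0:ℝ) ≤ d - a by linarith)
    have k2 := mul_le_mul_of_nonneg_left goal1 (show (0:ℝ) ≤ s - a by linarith [hs.1])
    have key : (c - a) * ((d - a) * T s) ≤ (c - a) * ((d - s) * T a + (s - a) * T d) := by
      linarith only [k1, k2]
    exact le_of_mul_le_mul_left key (by linarith)
  · have hsbd := hbd' s ⟨by linarith, hs.2⟩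
    have k1 := mul_le_mul_of_nonneg_left hsbd (show (0:ℝ) ≤ d - a by linarith)
    have k2 := mul_le_mul_of_nonneg_left goal2 (show (0:ℝ) ≤ d - s by linarith [hs.2])
    have key : (d - b) * ((d - a) * T s) ≤ (d - b) * ((d - s) * T a + (s - a) * T d) := by
      linarith only [k1, k2]
    exact le_of_mul_le_mul_left key (by linarith)

lemma terrain_edge {n : ℕ} (Ter : Terrain n) (j : Fin n) :
    ∀ s ∈ Set.Icc (Ter.x j.castSucc) (Ter.x j.succ),
      (Ter.x j.succ - Ter.x j.castSucc) * Ter.T s =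
        (Ter.x j.succ - s) * Ter.T (Ter.x j.castSucc)
          + (s - Ter.x j.castSucc) * Ter.T (Ter.x j.succ) := by
  intro s hs
  have huu : Ter.x j.castSucc < Ter.x j.succ := Ter.mono Fin.castSucc_lt_succ
  have hpos : (0:ℝ) < Ter.x j.succ - Ter.x j.castSucc := by linarith
  have ht : (s - Ter.x j.castSucc) / (Ter.x j.succ - Ter.x j.castSucc) ∈ Set.Icc (0:ℝ) 1 := by
    constructor
    · exact div_nonneg (by linarith [hs.1]) hpos.le
    · rw [div_le_one hpos]; linarith [hs.2]
  have h := Ter.affine j _ ht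
  have e : (1 - (s - Ter.x j.castSucc) / (Ter.x j.succ - Ter.x j.castSucc)) * Ter.x j.castSucc
      + (s - Ter.x j.castSucc) / (Ter.x j.succ - Ter.x j.castSucc) * Ter.x j.succ = s := by
    field_simp; ring
  rw [e] at h
  rw [h]
  field_simp
  ring

lemma exists_edge {n : ℕ} (Ter : Terrain n) (hn : 1 ≤ n) {p : ℝ}
    (hp : p ∈ Set.Icc (Ter.x 0) (Ter.x (Fin.last n))) :
    ∃ j : Fin n, Ter.x j.castSucc ≤ p ∧ p ≤ Ter.x j.succ := by
  classical
  set S : Finset (Fin (n + 1)) := Finset.univ.filter (fun j => Ter.x j ≤ p) with hS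
  have h0 : (0 : Fin (n+1)) ∈ S := by
    simp [hS]; exact hp.1
  have hne : S.Nonempty := ⟨0, h0⟩
  set k := S.max' hne with hk
  have hkS : k ∈ S := S.max'_mem hne
  have hkp : Ter.x k ≤ p := by
    have := hkS; simp [hS] at this; exact this
  by_cases hkn : (k : ℕ) < n
  · refine ⟨⟨(k : ℕ), hkn⟩, ?_, ?_⟩
    · have : (⟨(k : ℕ), hkn⟩ : Fin n).castSucc = k := by
        apply Fin.ext; simp
      rw [this]; exact hkp
    · by_contra hcon
      push_neg at hcon
      have hmem : (⟨(k : ℕ), hkn⟩ : Fin n).succ ∈ S := by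
        simp [hS]; exact hcon.le
      have := S.le_max' _ hmem
      rw [← hk] at this
      have h2 : ((⟨(k : ℕ), hkn⟩ : Fin n).succ : ℕ) ≤ (k : ℕ) := this
      simp at h2
  · have hkl : k = Fin.last n := by
      apply Fin.ext
      have := k.isLt
      simp [Fin.last]
      omega
    have hpl : p = Ter.x (Fin.last n) := le_antisymm hp.2 (hkl ▸ hkp)
    refine ⟨⟨n - 1, by omega⟩, ?_, ?_⟩
    · refine le_trans ?_ hpl.ge
      exact Ter.mono.monotone (Fin.le_last _)
    · have : (⟨n - 1, by omega⟩ : Fin n).succ = Fin.last n := by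
        apply Fin.ext; simp [Fin.last]; omega
      rw [this]; exact hpl.le

/-- If `N` sees a point `p` strictly to the right of the vertex `r ≥ N`, then some
vertex strictly to the right of `r` sees `N`. -/
lemma step5 {n : ℕ} (Ter : Terrain n) (hn : 1 ≤ n) {N p r : ℝ}
    (hp : p ∈ Set.Icc (Ter.x 0) (Ter.x (Fin.last n)))
    (hr_vert : r ∈ Set.range Ter.x) (hNr : N ≤ r) (hrp : r < p)
    (hNp : Sees Ter.T N p) :
    ∃ v ∈ Set.range Ter.x, r < v ∧ Sees Ter.T v N := by
  obtain ⟨j, hu, hu'⟩ := exists_edge Ter hn hp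
  obtain ⟨k, hk⟩ := hr_vert
  set u := Ter.x j.castSucc with hu_def
  set u' := Ter.x j.succ with hu'_def
  have hNp' : N < p := lt_of_le_of_lt hNr hrp
  have habove := above_of_sees hNp' hNp
  -- r is a vertex strictly left of p, hence r ≤ u
  have hru : r ≤ u := by
    have h1 : Ter.x k < Ter.x j.succ := by rw [hk]; exact lt_of_lt_of_le hrp hu'
    have h2 : k < j.succ := Ter.mono.lt_iff_lt.mp h1
    have h3 : k ≤ j.castSucc := by
      have := h2
      rw [Fin.lt_def] at this
      rw [Fin.le_def]
      simp [Fin.succ] at this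
      simp [Fin.castSucc, Fin.castAdd, Fin.castLE]
      omega
    rw [← hk] at *
    exact Ter.mono.monotone h3
  by_cases hpu : p = u
  · exact ⟨p, ⟨j.castSucc, by rw [hpu]⟩, hrp, sees_symm hNp⟩
  by_cases hpu' : p = u'
  · exact ⟨p, ⟨j.succ, by rw [hpu']⟩, hrp, sees_symm hNp⟩
  have hup : u < p := lt_of_le_of_ne hu (Ne.symm hpu)
  have hpu'lt : p < u' := lt_of_le_of_ne hu' hpu'
  have huu' : u < u' := lt_trans hup hpu'lt
  have edge := terrain_edge Ter j
  have Ep := edge p ⟨hu, hu'⟩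
  rcases le_or_gt ((p - u') * Ter.T N + (u' - N) * Ter.T p) ((p - N) * Ter.T u') with hA | hB
  · -- u' lies on or above the line through (N, T N) and (p, T p); u' sees N
    refine ⟨u', ⟨j.succ, rfl⟩, lt_trans hrp hpu'lt, ?_⟩
    apply sees_symm
    apply sees_of_above (show N < u' by linarith)
    intro s hs
    rcases le_total s p with h | h
    · have hsN := habove s ⟨hs.1, h⟩
      have k1 := mul_le_mul_of_nonneg_left hsN (show (0:ℝ) ≤ u' - N by linarith)
      have k2 := mul_le_mul_of_nonneg_left hA (show (0:ℝ) ≤ s - N by linarith [hs.1])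
      have key : (p - N) * ((u' - N) * Ter.T s)
          ≤ (p - N) * ((u' - s) * Ter.T N + (s - N) * Ter.T u') := by
        linarith only [k1, k2]
      exact le_of_mul_le_mul_left key (by linarith)
    · have Es := edge s ⟨by linarith, hs.2⟩
      have k1 : (u' - p) * ((u' - u) * Ter.T s)
          = (u' - p) * ((u' - s) * Ter.T u + (s - u) * Ter.T u') := by rw [Es]
      have k3 : (u' - s) * ((u' - u) * Ter.T p)
          = (u' - s) * ((u' - p) * Ter.T u + (p - u) * Ter.T u') := by rw [Ep]
      have Eps : (u' - u) * ((u' - p) * Ter.T s)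
          = (u' - u) * ((u' - s) * Ter.T p + (s - p) * Ter.T u') := by
        linarith only [k1, k3]
      have Eps' : (u' - p) * Ter.T s = (u' - s) * Ter.T p + (s - p) * Ter.T u' :=
        mul_left_cancel₀ (by linarith : (u':ℝ) - u ≠ 0) Eps
      have k2 := mul_le_mul_of_nonneg_left hA (show (0:ℝ) ≤ u' - s by linarith [hs.2])
      have k4 : (u' - N) * ((u' - p) * Ter.T s)
          = (u' - N) * ((u' - s) * Ter.T p + (s - p) * Ter.T u') := by rw [Eps']
      have key : (u' - p) * ((u' - N) * Ter.T s)
          ≤ (u' - p) * ((u' - s) * Ter.T N + (s - N) * Ter.T u') := by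
        linarith only [k2, k4]
      exact le_of_mul_le_mul_left key (by linarith)
  · -- u' strictly below the line through (N, T N) and (p, T p): impossible
    exfalso
    have hsu := habove u ⟨by linarith, hup.le⟩
    have k1 := mul_le_mul_of_nonneg_left hsu (show (0:ℝ) ≤ u' - p by linarith)
    have k2 := mul_lt_mul_of_pos_left hB (show (0:ℝ) < p - u by linarith)
    have k3 : (p - N) * ((u' - u) * Ter.T p)
        = (p - N) * ((u' - p) * Ter.T u + (p - u) * Ter.T u') := by rw [Ep]
    linarith only [k1, k2, k3]

/-- **Lemma 5.** With `N` the rightmost point not right-guarded by `{o i, …, o m}` and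
`r = R(N)` the rightmost vertex seeing `N`, if `r ∉ O_R(N)` then no guard of `O_R(N)`
can left-guard (indeed, see) any point strictly right of `r`. -/
theorem lemma5_cannot_guard {n m : ℕ} (Ter : Terrain n) (hn : 1 ≤ n)
    (o : Fin m → ℝ) (ho_mono : StrictMono o)
    (ho_vert : ∀ k : Fin m, o k ∈ Set.range Ter.x)
    (ho_guard : ∀ p ∈ Set.Icc (Ter.x 0) (Ter.x (Fin.last n)),
      TwoSidedGuards Ter.T (Set.range o) p)
    (i : Fin m)
    (N : ℝ) (hN : N ∈ Set.Icc (Ter.x 0) (Ter.x (Fin.last n)))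
    (hN_not : ∀ j : Fin m, i ≤ j → ¬ RightGuards Ter.T (o j) N)
    (hN_max : ∀ p ∈ Set.Icc (Ter.x 0) (Ter.x (Fin.last n)), N < p →
      ∃ j : Fin m, i ≤ j ∧ RightGuards Ter.T (o j) p)
    (r : ℝ) (hr_vert : r ∈ Set.range Ter.x)
    (hr_sees : Sees Ter.T r N)
    (hr_max : ∀ v ∈ Set.range Ter.x, r < v → ¬ Sees Ter.T v N)
    (hr_not : ¬ (r ∈ Set.range o ∧ RightGuards Ter.T r N)) :
    ∀ p ∈ Set.Icc (Ter.x 0) (Ter.x (Fin.last n)), r < p →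
      ∀ g ∈ Set.range o, RightGuards Ter.T g N → ¬ Sees Ter.T g p := by
  intro p hp hrp g hg hgN hgp
  -- N ≤ r
  have hNr : N ≤ r := by
    obtain ⟨v, hv, hvN⟩ := (ho_guard N hN).2
    obtain ⟨kv, hkv⟩ := hv
    have hvvert : v ∈ Set.range Ter.x := by rw [← hkv]; exact ho_vert kv
    have hvr : v ≤ r := by
      by_contra hcon
      push_neg at hcon
      exact hr_max v hvvert hcon hvN.2
    linarith [hvN.1]
  -- r is not one of the guards
  have hr_no : r ∉ Set.range o := fun hro => hr_not ⟨hro, hNr, hr_sees⟩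
  -- g ≤ r, and g ≠ r
  obtain ⟨kg, hkg⟩ := hg
  have hgvert : g ∈ Set.range Ter.x := by rw [← hkg]; exact ho_vert kg
  have hgr : g < r := by
    rcases lt_trichotomy g r with h | h | h
    · exact h
    · exact absurd (h ▸ ⟨kg, hkg⟩) hr_no
    · exact absurd hgN.2 (hr_max g hgvert h)
  -- order claim: N sees p
  have hNp : Sees Ter.T N p := order_claim hgN.1 hgr hrp (sees_symm hr_sees) hgp
  -- get a vertex strictly right of r seeing N: contradiction
  obtain ⟨v, hvvert, hrv, hvN⟩ := step5 Ter hn hp hr_vert hNr hrp hNp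
  exact hr_max v hvvert hrv hvN
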